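/- Let n_max ≥ 2 be an integer. Define r : {0,…,n_max−1} → ℝ by r(0) = 0 and r(ñ) = (n_max + ñ)/2 for 1 ≤ ñ ≤ n_max − 1, and define Υ : {0,…,n_max} → ℕ by Υ(0) = 0, Υ(n_max) = 2 + ⌈log₂ n_max⌉, and, for 1 ≤ n ≤ n_max − 1, Υ(n) = k where k ≥ 1 is an integer with (1 − 2^{1−k}) n_max < n ≤ (1 − 2^{−k}) n_max. Then: (0) for each 1 ≤ n ≤ n_max − 1 there is exactly one such k, so Υ is well defined; (a) Υ(n) ≤ 2 + ⌈log₂ n_max⌉ for every 0 ≤ n ≤ n_max; (b) whenever 0 ≤ ñ ≤ n_max − 1 and n is an integer with r(ñ) < n ≤ n_max, one has Υ(n) ≥ Υ(ñ) + 1. -/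

import Mathlib

lemma cond_iff' (N n k : ℕ) (hn : n ≤ N) (hk : 1 ≤ k) :
    ((1 - (2:ℝ)^((1:ℤ) - (k:ℤ))) * N < n ∧ (n:ℝ) ≤ (1 - (2:ℝ)^(-(k:ℤ))) * N)
    ↔ (N ≤ 2^k * (N - n) ∧ 2^k * (N - n) < 2 * N) := by
  obtain ⟨j, rfl⟩ : ∃ j, k = j + 1 := ⟨k - 1, by omega⟩
  have hb : (0:ℝ) < (2:ℝ)^j := by positivity
  have hc : (0:ℝ) < (2:ℝ)^(j+1) := by positivity
  have e1 : (2:ℝ)^((1:ℤ) - ((j+1:ℕ):ℤ)) = ((2:ℝ)^j)⁻¹ := by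
    rw [show (1:ℤ) - ((j+1:ℕ):ℤ) = -(j:ℤ) by push_cast; ring, zpow_neg, zpow_natCast]
  have e2 : (2:ℝ)^(-((j+1:ℕ):ℤ)) = ((2:ℝ)^(j+1))⁻¹ := by
    rw [zpow_neg, zpow_natCast]
  have hm : ((N - n : ℕ) : ℝ) = (N:ℝ) - n := by
    push_cast [hn]; ring
  rw [e1, e2]
  constructor
  · rintro ⟨h1, h2⟩
    constructor
    · have : (N:ℝ) ≤ 2^(j+1) * ((N:ℝ) - n) := by
        rw [sub_mul, one_mul, inv_mul_eq_div] at h2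
        have := (le_sub_comm).mp (by linarith : (n:ℝ) ≤ (N:ℝ) - (N:ℝ)/2^(j+1))
        rw [div_le_iff₀ hc] at this
        linarith
      have : (N:ℝ) ≤ 2^(j+1) * ((N - n : ℕ):ℝ) := by rw [hm]; exact this
      exact_mod_cast this
    · have : 2^(j+1) * ((N:ℝ) - n) < 2 * N := by
        rw [sub_mul, one_mul, inv_mul_eq_div, sub_lt_comm] at h1
        rw [lt_div_iff₀ hb] at h1
        have : ((N:ℝ) - n) * 2^(j+1) < 2 * N := by
          rw [pow_succ]; nlinarith
        linarith [this]
      have : (2:ℝ)^(j+1) * ((N - n : ℕ):ℝ) < 2 * N := by rw [hm]; exact this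
      exact_mod_cast this
  · rintro ⟨h1, h2⟩
    have h1' : (N:ℝ) ≤ 2^(j+1) * ((N:ℝ) - n) := by
      have : (N:ℝ) ≤ 2^(j+1) * ((N - n : ℕ):ℝ) := by exact_mod_cast h1
      rwa [hm] at this
    have h2' : (2:ℝ)^(j+1) * ((N:ℝ) - n) < 2 * N := by
      have : (2:ℝ)^(j+1) * ((N - n : ℕ):ℝ) < 2 * N := by exact_mod_cast h2
      rwa [hm] at this
    constructor
    · rw [sub_mul, one_mul, inv_mul_eq_div, sub_lt_comm, lt_div_iff₀ hb]
      rw [pow_succ] at h2'; nlinarith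
    · rw [sub_mul, one_mul, inv_mul_eq_div, le_sub_comm, div_le_iff₀ hc]
      nlinarith

/-- Properties of the bookkeeping functions `r` and `Υ` from the convex integration scheme:
`Υ` is well defined by its defining property, is bounded by `2 + ⌈log₂ n_max⌉`, and increases
by at least one whenever `n > r(nt)`. Here `⌈log₂ ·⌉ = Nat.clog 2`. -/
theorem upsilon_properties (nmax : ℕ) (h : 2 ≤ nmax) :
    (∀ n : ℕ, 1 ≤ n → n ≤ nmax - 1 →
      ∃! k : ℕ, 1 ≤ k ∧ (1 - (2:ℝ)^((1:ℤ) - (k:ℤ))) * (nmax:ℝ) < (n:ℝ) ∧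
        (n:ℝ) ≤ (1 - (2:ℝ)^(-(k:ℤ))) * (nmax:ℝ)) ∧
    ∀ Υ : ℕ → ℕ,
      Υ 0 = 0 →
      Υ nmax = 2 + Nat.clog 2 nmax →
      (∀ n : ℕ, 1 ≤ n → n ≤ nmax - 1 →
        1 ≤ Υ n ∧ (1 - (2:ℝ)^((1:ℤ) - (Υ n : ℤ))) * (nmax:ℝ) < (n:ℝ) ∧
          (n:ℝ) ≤ (1 - (2:ℝ)^(-(Υ n : ℤ))) * (nmax:ℝ)) →
      (∀ n : ℕ, n ≤ nmax → Υ n ≤ 2 + Nat.clog 2 nmax) ∧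
      (∀ nt n : ℕ, nt ≤ nmax - 1 → n ≤ nmax →
        (if nt = 0 then (0:ℝ) else ((nmax:ℝ) + (nt:ℝ))/2) < (n:ℝ) → Υ nt + 1 ≤ Υ n) := by
  have hclog : nmax ≤ 2 ^ Nat.clog 2 nmax := Nat.le_pow_clog one_lt_two nmax
  -- generic bound: any k satisfying the nat condition has k ≤ Nat.clog 2 nmax
  have bound : ∀ n k : ℕ, 1 ≤ n → n ≤ nmax - 1 → 1 ≤ k →
      nmax ≤ 2^k * (nmax - n) → 2^k * (nmax - n) < 2 * nmax → k ≤ Nat.clog 2 nmax := by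
    intro n k hn1 hn2 hk1 hA hB
    have hm : 1 ≤ nmax - n := by omega
    have h1 : 2^k < 2^(Nat.clog 2 nmax + 1) := by
      calc 2^k ≤ 2^k * (nmax - n) := Nat.le_mul_of_pos_right _ hm
        _ < 2 * nmax := hB
        _ ≤ 2 * 2 ^ Nat.clog 2 nmax := by omega
        _ = 2^(Nat.clog 2 nmax + 1) := by rw [pow_succ]; ring
    have := (Nat.pow_lt_pow_iff_right (a := 2) one_lt_two).mp h1
    omega
  constructor
  · -- well-definedness
    intro n hn1 hn2
    have hn : n ≤ nmax := by omega
    have hm : 1 ≤ nmax - n := by omega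
    have hex : ∃ k, nmax ≤ 2^k * (nmax - n) := by
      refine ⟨nmax, ?_⟩
      calc nmax ≤ 2^nmax := (Nat.lt_two_pow_self (n := nmax)).le
        _ ≤ 2^nmax * (nmax - n) := Nat.le_mul_of_pos_right _ hm
    set k := Nat.find hex with hkdef
    have hk1 : nmax ≤ 2^k * (nmax - n) := Nat.find_spec hex
    have hk0 : 1 ≤ k := by
      rcases Nat.eq_zero_or_pos k with h0 | h0
      · exfalso; rw [h0] at hk1; simp at hk1; omega
      · exact h0
    have hk2 : 2^k * (nmax - n) < 2 * nmax := by
      have hmin : ¬ nmax ≤ 2^(k-1) * (nmax - n) := Nat.find_min hex (by omega)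
      have he : 2^k = 2 * 2^(k-1) := by
        rw [← pow_succ']; congr 1; omega
      rw [he]; push_neg at hmin
      calc 2 * 2^(k-1) * (nmax - n) = 2 * (2^(k-1) * (nmax - n)) := by ring
        _ < 2 * nmax := by omega
    refine ⟨k, ⟨hk0, ((cond_iff' nmax n k hn hk0).mpr ⟨hk1, hk2⟩)⟩, ?_⟩
    rintro k' ⟨hk'0, hk'c⟩
    obtain ⟨hA, hB⟩ := (cond_iff' nmax n k' hn hk'0).mp hk'c
    by_contra hne
    rcases Nat.lt_or_ge k' k with hlt | hge
    · exact Nat.find_min hex hlt hA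
    · have hlt : k < k' := by omega
      have : 2 * nmax ≤ 2^k' * (nmax - n) := by
        calc 2 * nmax ≤ 2 * (2^k * (nmax - n)) := by omega
          _ = 2^(k+1) * (nmax - n) := by rw [pow_succ]; ring
          _ ≤ 2^k' * (nmax - n) :=
              Nat.mul_le_mul_right _ (Nat.pow_le_pow_right (by norm_num) (by omega))
      omega
  · intro Υ h0 hmax hprop
    have hnat : ∀ n : ℕ, 1 ≤ n → n ≤ nmax - 1 →
        1 ≤ Υ n ∧ nmax ≤ 2^(Υ n) * (nmax - n) ∧ 2^(Υ n) * (nmax - n) < 2 * nmax := by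
      intro n hn1 hn2
      obtain ⟨hk1, hc⟩ := hprop n hn1 hn2
      exact ⟨hk1, (cond_iff' nmax n (Υ n) (by omega) hk1).mp hc⟩
    have hbd : ∀ n : ℕ, 1 ≤ n → n ≤ nmax - 1 → Υ n ≤ Nat.clog 2 nmax := by
      intro n hn1 hn2
      obtain ⟨hk1, hA, hB⟩ := hnat n hn1 hn2
      exact bound n (Υ n) hn1 hn2 hk1 hA hB
    constructor
    · intro n hn
      rcases Nat.eq_zero_or_pos n with rfl | hn1
      · rw [h0]; omega
      rcases eq_or_lt_of_le hn with rfl | hlt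
      · rw [hmax]
      · have := hbd n hn1 (by omega); omega
    · intro nt n hnt hn hlt
      by_cases hnt0 : nt = 0
      · subst hnt0
        rw [if_pos rfl] at hlt
        have hn1 : 1 ≤ n := by exact_mod_cast Nat.cast_pos.mp hlt
        rw [h0]
        rcases eq_or_lt_of_le hn with rfl | hlt'
        · rw [hmax]; omega
        · have := (hnat n hn1 (by omega)).1; omega
      · rw [if_neg hnt0] at hlt
        have hnt1 : 1 ≤ nt := by omega
        obtain ⟨hkt1, hAt, hBt⟩ := hnat nt hnt1 hnt
        have hbdt : Υ nt ≤ Nat.clog 2 nmax := hbd nt hnt1 hnt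
        have hsum : nmax + nt < 2 * n := by
          have : (nmax:ℝ) + nt < 2 * n := by linarith
          exact_mod_cast this
        rcases eq_or_lt_of_le hn with rfl | hlt'
        · rw [hmax]; omega
        · have hn1 : 1 ≤ n := by omega
          obtain ⟨hk1, hA, hB⟩ := hnat n hn1 (by omega)
          by_contra hcon
          have hle : Υ n ≤ Υ nt := by omega
          have key : 2 * nmax < 2 * nmax := by
            calc 2 * nmax ≤ 2 * (2^(Υ n) * (nmax - n)) := by omega
              _ = 2^(Υ n) * (2 * (nmax - n)) := by ring
              _ < 2^(Υ n) * (nmax - nt) := by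
                  exact Nat.mul_lt_mul_of_pos_left (by omega) (by positivity)
              _ ≤ 2^(Υ nt) * (nmax - nt) :=
                  Nat.mul_le_mul_right _ (Nat.pow_le_pow_right (by norm_num) hle)
              _ < 2 * nmax := hBt
          omega
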